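/- Let f : ℝ → ℝ be any one of the functions f(y) = e^y, f(y) = e^y + y, or f(y) = e^y + e^{2y}. Then every maximal solution γ(t) = (x(t), x̃(t), y(t)) of the system of ordinary differential equations x'' = 0, x̃'' = 2f'(y) x' y', y'' = -f'(y)(x')² is defined on all of ℝ. (These are the geodesic equations of the Lorentzian manifolds N_{1,+}, N_{2,+}, N_{3,+}, so these manifolds are geodesically complete.) -/

import Mathlib

open Set Metric Real Filter Topology

noncomputable section

namespace NPlusGeodesic

/-- Vector field of the second-order ODE `Y'' = -k·g(Y)`, as a first-order system. -/
def Fvec (k : ℝ) (g : ℝ → ℝ) : ℝ × ℝ → ℝ × ℝ := fun p => (p.2, -(k * g p.1))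

/-- `p` solves the system on the set `s`. -/
def IsSolOn (k : ℝ) (g : ℝ → ℝ) (s : Set ℝ) (p : ℝ → ℝ × ℝ) : Prop :=
  ∀ t ∈ s, HasDerivWithinAt p (Fvec k g (p t)) s t

theorem hdw_fst {p : ℝ → ℝ × ℝ} {d : ℝ × ℝ} {s : Set ℝ} {t : ℝ}
    (h : HasDerivWithinAt p d s t) : HasDerivWithinAt (fun t => (p t).1) d.1 s t :=
  (ContinuousLinearMap.fst ℝ ℝ ℝ).hasFDerivAt.comp_hasDerivWithinAt t h

theorem hdw_snd {p : ℝ → ℝ × ℝ} {d : ℝ × ℝ} {s : Set ℝ} {t : ℝ}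
    (h : HasDerivWithinAt p d s t) : HasDerivWithinAt (fun t => (p t).2) d.2 s t :=
  (ContinuousLinearMap.snd ℝ ℝ ℝ).hasFDerivAt.comp_hasDerivWithinAt t h

theorem hd_fst {p : ℝ → ℝ × ℝ} {d : ℝ × ℝ} {t : ℝ}
    (h : HasDerivAt p d t) : HasDerivAt (fun t => (p t).1) d.1 t :=
  (ContinuousLinearMap.fst ℝ ℝ ℝ).hasFDerivAt.comp_hasDerivAt t h

theorem hd_snd {p : ℝ → ℝ × ℝ} {d : ℝ × ℝ} {t : ℝ}
    (h : HasDerivAt p d t) : HasDerivAt (fun t => (p t).2) d.2 t :=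
  (ContinuousLinearMap.snd ℝ ℝ ℝ).hasFDerivAt.comp_hasDerivAt t h

theorem hasDerivWithinAt_singleton (f : ℝ → ℝ × ℝ) (d : ℝ × ℝ) (a : ℝ) :
    HasDerivWithinAt f d {a} a := by
  rw [hasDerivWithinAt_iff_tendsto_slope]
  simp [Set.diff_self]

theorem IsSolOn.mono {k : ℝ} {g : ℝ → ℝ} {s s' : Set ℝ} {p : ℝ → ℝ × ℝ}
    (h : IsSolOn k g s' p) (hss : s ⊆ s') : IsSolOn k g s p :=
  fun t ht => (h t (hss ht)).mono hss

theorem g_lipschitz {g G : ℝ → ℝ} (hg : ∀ y, HasDerivAt g (G y) y) (hG0 : ∀ y, 0 ≤ G y)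
    (hGm : Monotone G) (R : ℝ) {y z : ℝ} (hy : y ≤ R) (hz : z ≤ R) :
    |g y - g z| ≤ G R * |y - z| := by
  have := (convex_Iic R).norm_image_sub_le_of_norm_hasDerivWithin_le (f := g) (f' := G)
    (C := G R) (fun x _ => (hg x).hasDerivWithinAt) (fun x hx => by
      rw [Real.norm_eq_abs, abs_of_nonneg (hG0 x)]; exact hGm hx) hz hy
  simpa [Real.norm_eq_abs, abs_sub_comm] using this

theorem Fvec_lipschitz {k : ℝ} (hk : 0 ≤ k) {g G : ℝ → ℝ} (hg : ∀ y, HasDerivAt g (G y) y)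
    (hG0 : ∀ y, 0 ≤ G y) (hGm : Monotone G) (R : ℝ) :
    LipschitzOnWith (Real.toNNReal (max 1 (k * G R))) (Fvec k g) (Iic R ×ˢ (univ : Set ℝ)) := by
  rw [lipschitzOnWith_iff_dist_le_mul]
  intro p hp q hq
  rw [Real.coe_toNNReal _ (le_max_iff.2 (Or.inl zero_le_one))]
  have h1 : dist p.1 q.1 ≤ dist p q := le_max_left _ _
  have h2 : dist p.2 q.2 ≤ dist p q := le_max_right _ _
  have hgl : |g p.1 - g q.1| ≤ G R * |p.1 - q.1| :=
    g_lipschitz hg hG0 hGm R hp.1 hq.1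
  rw [show Fvec k g p = (p.2, -(k * g p.1)) from rfl,
    show Fvec k g q = (q.2, -(k * g q.1)) from rfl, Prod.dist_eq]
  apply max_le
  · exact h2.trans (le_mul_of_one_le_left dist_nonneg (le_max_left _ _))
  · have : dist (-(k * g p.1)) (-(k * g q.1)) = k * |g p.1 - g q.1| := by
      rw [dist_neg_neg, Real.dist_eq, ← mul_sub, abs_mul, abs_of_nonneg hk]
    rw [this]
    calc k * |g p.1 - g q.1| ≤ k * (G R * |p.1 - q.1|) := by
          exact mul_le_mul_of_nonneg_left hgl hk
      _ = (k * G R) * dist p.1 q.1 := by rw [Real.dist_eq]; ring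
      _ ≤ max 1 (k * G R) * dist p q := by
          apply mul_le_mul (le_max_right _ _) h1 dist_nonneg
          exact le_trans (by positivity) (le_max_left _ _)

theorem IsSolOn.glue {k : ℝ} {g : ℝ → ℝ} {a c d : ℝ} {p q : ℝ → ℝ × ℝ}
    (hac : a ≤ c) (hcd : c ≤ d)
    (hp : IsSolOn k g (Icc a c) p) (hq : IsSolOn k g (Icc c d) q) (hpq : p c = q c) :
    IsSolOn k g (Icc a d) (fun t => if t ≤ c then p t else q t) := by
  set z : ℝ → ℝ × ℝ := fun t => if t ≤ c then p t else q t with hz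
  intro t ht
  rcases lt_trichotomy t c with h | h | h
  · have ht' : t ∈ Icc a c := ⟨ht.1, h.le⟩
    have hmem : Icc a c ∈ 𝓝[Icc a d] t := by
      refine Filter.mem_of_superset (inter_mem_nhdsWithin (Icc a d) (Iic_mem_nhds h)) ?_
      rintro s ⟨hs1, hs2⟩; exact ⟨hs1.1, hs2⟩
    have h1 : HasDerivWithinAt p (Fvec k g (p t)) (Icc a d) t :=
      (hp t ht').mono_of_mem_nhdsWithin hmem
    have hzt : z t = p t := if_pos h.le
    rw [hzt]
    refine h1.congr_of_eventuallyEq ?_ hzt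
    filter_upwards [mem_nhdsWithin_of_mem_nhds (Iic_mem_nhds h)] with s hs
    exact if_pos hs
  · subst h
    have hzt : z t = p t := if_pos le_rfl
    rw [hzt, ← Icc_union_Icc_eq_Icc hac hcd]
    apply HasDerivWithinAt.union
    · refine (hp t ⟨hac, le_rfl⟩).congr (fun s hs => if_pos hs.2) hzt
    · have : Fvec k g (p t) = Fvec k g (q t) := by rw [hpq]
      rw [this]
      refine (hq t ⟨le_rfl, hcd⟩).congr (fun s hs => ?_) (by rw [hzt, hpq])
      by_cases hsc : s ≤ t
      · have hst : s = t := le_antisymm hsc hs.1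
        rw [hst, hzt, hpq]
      · exact if_neg hsc
  · have ht' : t ∈ Icc c d := ⟨h.le, ht.2⟩
    have hmem : Icc c d ∈ 𝓝[Icc a d] t := by
      refine Filter.mem_of_superset (inter_mem_nhdsWithin (Icc a d) (Ici_mem_nhds h)) ?_
      rintro s ⟨hs1, hs2⟩; exact ⟨hs2, hs1.2⟩
    have hzt : z t = q t := if_neg (not_le.2 h)
    rw [hzt]
    refine ((hq t ht').mono_of_mem_nhdsWithin hmem).congr_of_eventuallyEq ?_ hzt
    filter_upwards [mem_nhdsWithin_of_mem_nhds (Ioi_mem_nhds h)] with s hs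
    exact if_neg (not_le.2 hs)

theorem apriori_bound {k : ℝ} {g : ℝ → ℝ} (hk : 0 ≤ k)
    (hg0 : ∀ y, 0 ≤ g y) (hgm : Monotone g)
    {a b b' : ℝ} (hab' : a ≤ b') (hb'b : b' ≤ b) {p : ℝ → ℝ × ℝ}
    (hp : IsSolOn k g (Icc a b') p) :
    ∀ t ∈ Icc a b', (p t).1 ≤ (p a).1 + |(p a).2| * (b - a) ∧
      |(p t).2| ≤ |(p a).2| + k * g ((p a).1 + |(p a).2| * (b - a)) * (b - a) := by
  set Y : ℝ → ℝ := fun t => (p t).1 with hY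
  set V : ℝ → ℝ := fun t => (p t).2 with hV
  set M : ℝ := (p a).1 + |(p a).2| * (b - a) with hM
  have hba : (0:ℝ) ≤ b - a := by linarith
  have hpc : ContinuousOn p (Icc a b') := fun t ht => (hp t ht).continuousWithinAt
  have hYc : ContinuousOn Y (Icc a b') := (continuous_fst.comp_continuousOn hpc)
  have hVc : ContinuousOn V (Icc a b') := (continuous_snd.comp_continuousOn hpc)
  have hint : interior (Icc a b') ⊆ Icc a b' := interior_subset
  have hVanti : AntitoneOn V (Icc a b') := by
    apply antitoneOn_of_hasDerivWithinAt_nonpos (convex_Icc a b') hVc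
      (f' := fun t => -(k * g (Y t)))
    · intro x hx
      exact (hdw_snd (hp x (hint hx))).mono hint
    · intro x _
      have : 0 ≤ k * g (Y x) := mul_nonneg hk (hg0 _)
      linarith
  have hYM : ∀ t ∈ Icc a b', Y t ≤ M := by
    have hWanti : AntitoneOn (fun t => Y t - |V a| * t) (Icc a b') := by
      apply antitoneOn_of_hasDerivWithinAt_nonpos (convex_Icc a b')
        (hYc.sub (continuousOn_const.mul continuousOn_id))
        (f' := fun t => V t - |V a|)
      · intro x hx
        have hid : HasDerivWithinAt (fun t => |V a| * t) (|V a|) (interior (Icc a b')) x := by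
          simpa using (hasDerivWithinAt_id x (interior (Icc a b'))).const_mul (|V a|)
        exact ((hdw_fst (hp x (hint hx))).mono hint).sub hid
      · intro x hx
        have h1 : V x ≤ V a := hVanti ⟨le_rfl, hab'⟩ (hint hx) (hint hx).1
        have h2 : V a ≤ |V a| := le_abs_self _
        linarith
    intro t ht
    have := hWanti ⟨le_rfl, hab'⟩ ht ht.1
    have habs : 0 ≤ |V a| := abs_nonneg _
    have : Y t ≤ Y a + |V a| * (t - a) := by dsimp at this ⊢; nlinarith
    have ht' : t - a ≤ b - a := by have := ht.2; linarith
    rw [hM]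
    nlinarith
  intro t ht
  refine ⟨hYM t ht, ?_⟩
  have hVlip : ‖V t - V a‖ ≤ (k * g M) * ‖t - a‖ := by
    apply (convex_Icc a b').norm_image_sub_le_of_norm_hasDerivWithin_le
      (f := V) (f' := fun t => -(k * g (Y t))) (fun x hx => hdw_snd (hp x hx))
      (fun x hx => ?_) ⟨le_rfl, hab'⟩ ht
    rw [norm_neg, Real.norm_eq_abs, abs_of_nonneg (mul_nonneg hk (hg0 _))]
    exact mul_le_mul_of_nonneg_left (hgm (hYM x hx)) hk
  rw [Real.norm_eq_abs, Real.norm_eq_abs,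
    abs_of_nonneg (by linarith [ht.1] : (0:ℝ) ≤ t - a)] at hVlip
  have h1 : |V t| - |V a| ≤ |V t - V a| := by
    have := abs_sub_abs_le_abs_sub (V t) (V a); linarith
  have h2 : (k * g M) * (t - a) ≤ (k * g M) * (b - a) := by
    apply mul_le_mul_of_nonneg_left _ (mul_nonneg hk (hg0 _))
    have := ht.2; linarith
  have : |V t| ≤ |V a| + k * g M * (b - a) := by linarith
  exact this

theorem step_exists {k : ℝ} (hk : 0 ≤ k) {g G : ℝ → ℝ} (hg : ∀ y, HasDerivAt g (G y) y)
    (hg0 : ∀ y, 0 ≤ g y) (hgm : Monotone g) (hG0 : ∀ y, 0 ≤ G y) (hGm : Monotone G)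
    (M RV : ℝ) (hRV : 0 ≤ RV) :
    ∃ ε > (0:ℝ), ∀ (s s' : ℝ) (p0 : ℝ × ℝ), s ≤ s' → s' ≤ s + ε → p0.1 ≤ M → |p0.2| ≤ RV →
      ∃ q : ℝ → ℝ × ℝ, q s = p0 ∧ IsSolOn k g (Icc s s') q := by
  set C : ℝ := max (RV + 1) (k * g (M + 1)) with hC
  have hC0 : (0:ℝ) ≤ C := le_trans (by linarith) (le_max_left _ _)
  refine ⟨1 / (C + 1), by positivity, ?_⟩
  intro s s' p0 hss' hs'le hp1 hp2
  have hpl : IsPicardLindelof (fun _ : ℝ => Fvec k g) (tmin := s) (tmax := s')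
      ⟨s, le_rfl, hss'⟩ p0 1 0 ⟨C, hC0⟩ (Real.toNNReal (max 1 (k * G (M + 1)))) := by
    have hsub : closedBall p0 1 ⊆ Iic (M+1) ×ˢ (univ : Set ℝ) := by
      intro x hx
      have h1 : dist x.1 p0.1 ≤ 1 := le_trans (le_max_left _ _) (by
        rw [← Prod.dist_eq]; exact mem_closedBall.1 hx)
      have : x.1 - p0.1 ≤ 1 := le_trans (le_abs_self _) (by rwa [← Real.dist_eq])
      exact ⟨by simp only [mem_Iic]; linarith, mem_univ _⟩
    constructor
    · exact fun t _ => (Fvec_lipschitz hk hg hG0 hGm (M+1)).mono hsub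
    · exact fun x _ => continuousOn_const
    · intro t _ x hx
      have hx' := hsub hx
      have h2 : dist x.2 p0.2 ≤ 1 := le_trans (le_max_right _ _) (by
        rw [← Prod.dist_eq]; exact mem_closedBall.1 hx)
      have h2' : |x.2| ≤ RV + 1 := by
        have := abs_sub_abs_le_abs_sub x.2 p0.2
        rw [Real.dist_eq] at h2; linarith
      rw [show Fvec k g x = (x.2, -(k * g x.1)) from rfl, Prod.norm_def]
      apply max_le
      · exact le_trans (by simpa [Real.norm_eq_abs] using h2') (le_max_left _ _)
      · rw [Real.norm_eq_abs, abs_neg, abs_of_nonneg (mul_nonneg hk (hg0 _))]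
        exact le_trans (mul_le_mul_of_nonneg_left (hgm hx'.1) hk) (le_max_right _ _)
    · show C * max (s' - s) (s - s) ≤ ((1:NNReal):ℝ) - ((0:NNReal):ℝ)
      rw [NNReal.coe_one, NNReal.coe_zero, sub_zero]
      rw [sub_self, max_eq_left (by linarith : (0:ℝ) ≤ s' - s)]
      calc C * (s' - s) ≤ C * (1 / (C + 1)) := by
            apply mul_le_mul_of_nonneg_left (by linarith) hC0
        _ = C / (C + 1) := by ring
        _ ≤ 1 := by rw [div_le_one (by linarith)]; linarith
  obtain ⟨q, hq0, hqsol⟩ := hpl.exists_eq_forall_mem_Icc_hasDerivWithinAt₀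
  exact ⟨q, hq0, hqsol⟩

theorem forward_exists {k : ℝ} (hk : 0 ≤ k) {g G : ℝ → ℝ} (hg : ∀ y, HasDerivAt g (G y) y)
    (hg0 : ∀ y, 0 ≤ g y) (hgm : Monotone g) (hG0 : ∀ y, 0 ≤ G y) (hGm : Monotone G)
    (a b : ℝ) (hab : a ≤ b) (p0 : ℝ × ℝ) :
    ∃ p : ℝ → ℝ × ℝ, p a = p0 ∧ IsSolOn k g (Icc a b) p := by
  set M : ℝ := p0.1 + |p0.2| * (b - a) with hM
  set RV : ℝ := |p0.2| + k * g M * (b - a) with hRV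
  have hba : (0:ℝ) ≤ b - a := by linarith
  have hRV0 : 0 ≤ RV := by
    have := abs_nonneg p0.2
    have := mul_nonneg (mul_nonneg hk (hg0 M)) hba
    linarith
  obtain ⟨ε, hε, hstep⟩ := step_exists hk hg hg0 hgm hG0 hGm M RV hRV0
  have claim : ∀ n : ℕ, ∃ q : ℝ → ℝ × ℝ, q a = p0 ∧
      IsSolOn k g (Icc a (min b (a + n * ε))) q := by
    intro n
    induction n with
    | zero =>
      refine ⟨fun _ => p0, rfl, ?_⟩
      have : min b (a + (0:ℕ) * ε) = a := by
        simp [min_eq_right hab]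
      rw [this, Icc_self]
      intro t ht
      have : t = a := ht
      subst this
      exact hasDerivWithinAt_singleton _ _ _
    | succ n ih =>
      obtain ⟨q, hqa, hq⟩ := ih
      by_cases hble : b ≤ a + n * ε
      · have heq : min b (a + (n+1 : ℕ) * ε) = min b (a + n * ε) := by
          rw [min_eq_left hble, min_eq_left]
          push_cast; nlinarith
        exact ⟨q, hqa, heq ▸ hq⟩
      · push_neg at hble
        set sn : ℝ := a + n * ε with hsn
        have hasn : a ≤ sn := by
          have : (0:ℝ) ≤ n * ε := by positivity
          linarith
        have hmin : min b (a + n * ε) = sn := min_eq_right hble.le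
        rw [hmin] at hq
        have hbound := apriori_bound hk hg0 hgm hasn hble.le hq sn ⟨hasn, le_rfl⟩
        rw [hqa] at hbound
        have hb1 : (q sn).1 ≤ M := hbound.1
        have hb2 : |(q sn).2| ≤ RV := hbound.2
        set s' : ℝ := min b (sn + ε) with hs'
        have hss' : sn ≤ s' := le_min hble.le (by linarith)
        obtain ⟨r, hr0, hrsol⟩ := hstep sn s' (q sn) hss' (min_le_right _ _) hb1 hb2
        have heq2 : min b (a + (n+1 : ℕ) * ε) = s' := by
          rw [hs', hsn]; push_cast; ring_nf
        refine ⟨fun t => if t ≤ sn then q t else r t,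
          by show (if a ≤ sn then q a else r a) = p0; rw [if_pos hasn, hqa], ?_⟩
        rw [heq2]
        exact IsSolOn.glue hasn hss' hq hrsol hr0.symm
  obtain ⟨n, hn⟩ := exists_nat_ge ((b - a) / ε)
  obtain ⟨q, hqa, hq⟩ := claim n
  have : min b (a + n * ε) = b := by
    rw [min_eq_left]
    rw [div_le_iff₀ hε] at hn
    linarith
  rw [this] at hq
  exact ⟨q, hqa, hq⟩

theorem reflect_sol {k : ℝ} {g : ℝ → ℝ} {a b : ℝ} {p : ℝ → ℝ × ℝ}
    (hp : IsSolOn k g (Icc a b) p) :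
    IsSolOn k g (Icc a b) (fun t => ((p (a + b - t)).1, -(p (a + b - t)).2)) := by
  intro t ht
  have hrt : a + b - t ∈ Icc a b := ⟨by linarith [ht.2], by linarith [ht.1]⟩
  have hr : HasDerivWithinAt (fun t : ℝ => a + b - t) (-1) (Icc a b) t := by
    simpa using (hasDerivWithinAt_id t (Icc a b)).const_sub (a + b)
  have hmaps : MapsTo (fun t : ℝ => a + b - t) (Icc a b) (Icc a b) := by
    intro s hs
    show a + b - s ∈ Icc a b
    exact ⟨by linarith [hs.2], by linarith [hs.1]⟩
  have hq : HasDerivWithinAt (fun s => p (a + b - s))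
      ((-1 : ℝ) • Fvec k g (p (a + b - t))) (Icc a b) t :=
    HasDerivWithinAt.scomp t (hp _ hrt) hr hmaps
  have h2 := (hdw_fst hq).prodMk ((hdw_snd hq).neg)
  convert h2 using 1
  show Fvec k g ((p (a + b - t)).1, -(p (a + b - t)).2) = _
  rw [show ∀ z : ℝ × ℝ, Fvec k g z = (z.2, -(k * g z.1)) from fun _ => rfl]
  simp [Prod.ext_iff, Fvec]
  rfl

theorem exists_Icc {k : ℝ} (hk : 0 ≤ k) {g G : ℝ → ℝ} (hg : ∀ y, HasDerivAt g (G y) y)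
    (hg0 : ∀ y, 0 ≤ g y) (hgm : Monotone g) (hG0 : ∀ y, 0 ≤ G y) (hGm : Monotone G)
    (a b t0 : ℝ) (hat0 : a ≤ t0) (ht0b : t0 ≤ b) (p0 : ℝ × ℝ) :
    ∃ p : ℝ → ℝ × ℝ, p t0 = p0 ∧ IsSolOn k g (Icc a b) p := by
  obtain ⟨pf, hpf0, hpfsol⟩ := forward_exists hk hg hg0 hgm hG0 hGm t0 b ht0b p0
  obtain ⟨qb, hqb0, hqbsol⟩ := forward_exists hk hg hg0 hgm hG0 hGm a t0 hat0 (p0.1, -p0.2)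
  set pb : ℝ → ℝ × ℝ := fun t => ((qb (a + t0 - t)).1, -(qb (a + t0 - t)).2) with hpb
  have hpbsol : IsSolOn k g (Icc a t0) pb := reflect_sol hqbsol
  have hpb0 : pb t0 = p0 := by
    show ((qb (a + t0 - t0)).1, -(qb (a + t0 - t0)).2) = p0
    rw [show a + t0 - t0 = a by ring, hqb0]; simp
  refine ⟨fun t => if t ≤ t0 then pb t else pf t, ?_, ?_⟩
  · show (if t0 ≤ t0 then pb t0 else pf t0) = p0
    rw [if_pos le_rfl, hpb0]
  · exact IsSolOn.glue hat0 ht0b hpbsol hpfsol (by rw [hpb0, hpf0])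

theorem sol_unique {k : ℝ} (hk : 0 ≤ k) {g G : ℝ → ℝ} (hg : ∀ y, HasDerivAt g (G y) y)
    (hG0 : ∀ y, 0 ≤ G y) (hGm : Monotone G)
    {a b t0 : ℝ} (ht0 : t0 ∈ Icc a b) {p q : ℝ → ℝ × ℝ}
    (hp : IsSolOn k g (Icc a b) p) (hq : IsSolOn k g (Icc a b) q)
    (h0 : p t0 = q t0) : ∀ t ∈ Icc a b, p t = q t := by
  have hpc : ContinuousOn p (Icc a b) := fun t ht => (hp t ht).continuousWithinAt
  have hqc : ContinuousOn q (Icc a b) := fun t ht => (hq t ht).continuousWithinAt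
  obtain ⟨R, hR⟩ : ∃ R : ℝ, ∀ t ∈ Icc a b, (p t).1 ≤ R ∧ (q t).1 ≤ R := by
    obtain ⟨R1, hR1⟩ := (isCompact_Icc.image_of_continuousOn
      (continuous_fst.comp_continuousOn hpc)).bddAbove
    obtain ⟨R2, hR2⟩ := (isCompact_Icc.image_of_continuousOn
      (continuous_fst.comp_continuousOn hqc)).bddAbove
    refine ⟨max R1 R2, fun t ht => ⟨?_, ?_⟩⟩
    · exact le_trans (hR1 (mem_image_of_mem _ ht)) (le_max_left _ _)
    · exact le_trans (hR2 (mem_image_of_mem _ ht)) (le_max_right _ _)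
  have hmem : ∀ (r : ℝ → ℝ × ℝ), (∀ t ∈ Icc a b, (r t).1 ≤ R) →
      ∀ t ∈ Icc a b, r t ∈ Iic R ×ˢ (univ : Set ℝ) := fun r h t ht => ⟨h t ht, mem_univ _⟩
  have hlip : ∀ t : ℝ, LipschitzOnWith (Real.toNNReal (max 1 (k * G R)))
      ((fun _ : ℝ => Fvec k g) t) (Iic R ×ˢ (univ : Set ℝ)) := fun _ =>
    Fvec_lipschitz hk hg hG0 hGm R
  have hright : ∀ t ∈ Icc t0 b, p t = q t := by
    rcases eq_or_lt_of_le ht0.2 with h | hlt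
    · intro t ht
      have : t = t0 := le_antisymm (h ▸ ht.2) ht.1
      rw [this, h0]
    intro t ht
    have key : EqOn p q (Icc t0 b) := by
      apply ODE_solution_unique_of_mem_Icc_right (fun t _ => hlip t)
        (hpc.mono (Icc_subset_Icc_left ht0.1)) ?_ ?_
        (hqc.mono (Icc_subset_Icc_left ht0.1)) ?_ ?_ h0
      · intro s hs
        refine (hp s ⟨le_trans ht0.1 hs.1, hs.2.le⟩).mono_of_mem_nhdsWithin ?_
        refine Filter.mem_of_superset (inter_mem_nhdsWithin (Ici s) (Iio_mem_nhds hs.2)) ?_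
        rintro u ⟨hu1, hu2⟩
        exact ⟨le_trans (le_trans ht0.1 hs.1) hu1, hu2.le⟩
      · exact fun s hs => (hmem p (fun u hu => (hR u hu).1)) s ⟨le_trans ht0.1 hs.1, hs.2.le⟩
      · intro s hs
        refine (hq s ⟨le_trans ht0.1 hs.1, hs.2.le⟩).mono_of_mem_nhdsWithin ?_
        refine Filter.mem_of_superset (inter_mem_nhdsWithin (Ici s) (Iio_mem_nhds hs.2)) ?_
        rintro u ⟨hu1, hu2⟩
        exact ⟨le_trans (le_trans ht0.1 hs.1) hu1, hu2.le⟩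
      · exact fun s hs => (hmem q (fun u hu => (hR u hu).2)) s ⟨le_trans ht0.1 hs.1, hs.2.le⟩
    exact key ht
  have hleft : ∀ t ∈ Icc a t0, p t = q t := by
    rcases eq_or_lt_of_le ht0.1 with h | hlt
    · intro t ht
      have : t = t0 := le_antisymm ht.2 (h ▸ ht.1)
      rw [this, h0]
    intro t ht
    have key : EqOn p q (Icc a t0) := by
      apply ODE_solution_unique_of_mem_Icc_left (fun t _ => hlip t)
        (hpc.mono (Icc_subset_Icc_right ht0.2)) ?_ ?_
        (hqc.mono (Icc_subset_Icc_right ht0.2)) ?_ ?_ h0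
      · intro s hs
        refine (hp s ⟨hs.1.le, le_trans hs.2 ht0.2⟩).mono_of_mem_nhdsWithin ?_
        refine Filter.mem_of_superset (inter_mem_nhdsWithin (Iic s) (Ioi_mem_nhds hs.1)) ?_
        rintro u ⟨hu1, hu2⟩
        exact ⟨hu2.le, le_trans hu1 (le_trans hs.2 ht0.2)⟩
      · exact fun s hs => (hmem p (fun u hu => (hR u hu).1)) s ⟨hs.1.le, le_trans hs.2 ht0.2⟩
      · intro s hs
        refine (hq s ⟨hs.1.le, le_trans hs.2 ht0.2⟩).mono_of_mem_nhdsWithin ?_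
        refine Filter.mem_of_superset (inter_mem_nhdsWithin (Iic s) (Ioi_mem_nhds hs.1)) ?_
        rintro u ⟨hu1, hu2⟩
        exact ⟨hu2.le, le_trans hu1 (le_trans hs.2 ht0.2)⟩
      · exact fun s hs => (hmem q (fun u hu => (hR u hu).2)) s ⟨hs.1.le, le_trans hs.2 ht0.2⟩
    exact key ht
  intro t ht
  rcases le_total t t0 with h | h
  · exact hleft t ⟨ht.1, h⟩
  · exact hright t ⟨h, ht.2⟩

theorem global_exists {k : ℝ} (hk : 0 ≤ k) {g G : ℝ → ℝ} (hg : ∀ y, HasDerivAt g (G y) y)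
    (hg0 : ∀ y, 0 ≤ g y) (hgm : Monotone g) (hG0 : ∀ y, 0 ≤ G y) (hGm : Monotone G)
    (t0 : ℝ) (p0 : ℝ × ℝ) :
    ∃ p : ℝ → ℝ × ℝ, p t0 = p0 ∧ ∀ t, HasDerivAt p (Fvec k g (p t)) t := by
  have hex : ∀ n : ℕ, ∃ p : ℝ → ℝ × ℝ, p t0 = p0 ∧
      IsSolOn k g (Icc (t0 - (n+1)) (t0 + (n+1))) p := fun n =>
    exists_Icc hk hg hg0 hgm hG0 hGm _ _ t0 (by linarith [Nat.cast_nonneg (α := ℝ) n])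
      (by linarith [Nat.cast_nonneg (α := ℝ) n]) p0
  choose ps hps0 hpssol using hex
  have hagree : ∀ m n : ℕ, ∀ t : ℝ, |t - t0| ≤ (min m n : ℕ) + 1 → ps m t = ps n t := by
    intro m n t htle
    set c : ℝ := (min m n : ℕ) + 1 with hc
    have hc0 : (0:ℝ) < c := by positivity
    have hsub : ∀ j : ℕ, (min m n : ℕ) ≤ j → Icc (t0 - c) (t0 + c) ⊆
        Icc (t0 - (j+1)) (t0 + (j+1)) := by
      intro j hj
      have hcast : ((min m n : ℕ) : ℝ) ≤ (j : ℝ) := by exact_mod_cast hj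
      apply Icc_subset_Icc <;> (rw [hc]; linarith)
    have ht0mem : t0 ∈ Icc (t0 - c) (t0 + c) := ⟨by linarith, by linarith⟩
    have h1 : IsSolOn k g (Icc (t0 - c) (t0 + c)) (ps m) :=
      (hpssol m).mono (hsub m (min_le_left _ _))
    have h2 : IsSolOn k g (Icc (t0 - c) (t0 + c)) (ps n) :=
      (hpssol n).mono (hsub n (min_le_right _ _))
    have := sol_unique hk hg hG0 hGm ht0mem h1 h2 (by rw [hps0, hps0])
    apply this
    rcases abs_le.1 htle with ⟨hl, hr⟩
    exact ⟨by linarith, by linarith⟩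
  refine ⟨fun t => ps ⌈|t - t0|⌉₊ t, ?_, ?_⟩
  · show ps ⌈|t0 - t0|⌉₊ t0 = p0
    rw [hps0]
  · intro t
    set n : ℕ := ⌈|t - t0|⌉₊ + 1 with hn
    have hlt : |t - t0| < (n : ℝ) := by
      have := Nat.le_ceil |t - t0|
      rw [hn]; push_cast; linarith
    set U : Set ℝ := Ioo (t0 - n) (t0 + n) with hU
    have htU : t ∈ U := by
      rcases abs_lt.1 hlt with ⟨hl, hr⟩
      exact ⟨by linarith, by linarith⟩
    have hUeq : ∀ s ∈ U, ps ⌈|s - t0|⌉₊ s = ps n s := by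
      intro s hs
      apply hagree
      have h1 : |s - t0| ≤ (⌈|s - t0|⌉₊ : ℝ) := Nat.le_ceil _
      have h2 : |s - t0| ≤ (n : ℝ) := by
        rcases hs with ⟨hl, hr⟩
        rw [abs_le]; constructor <;> linarith
      have : |s - t0| ≤ ((min ⌈|s - t0|⌉₊ n : ℕ) : ℝ) := by
        rcases le_total (⌈|s - t0|⌉₊ : ℕ) n with h | h
        · rwa [min_eq_left h]
        · rwa [min_eq_right h]
      linarith
    have hderivN : HasDerivAt (ps n) (Fvec k g (ps n t)) t := by
      have hmem : Icc (t0 - ((n:ℝ)+1)) (t0 + ((n:ℝ)+1)) ∈ 𝓝 t := by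
        apply Icc_mem_nhds
        · rcases abs_lt.1 hlt with ⟨hl, _⟩; linarith
        · rcases abs_lt.1 hlt with ⟨_, hr⟩; linarith
      exact ((hpssol n) t (mem_of_mem_nhds hmem)).hasDerivAt hmem
    have hev : (fun s => ps ⌈|s - t0|⌉₊ s) =ᶠ[𝓝 t] ps n := by
      filter_upwards [isOpen_Ioo.mem_nhds htU] with s hs
      exact hUeq s hs
    have := hderivN.congr_of_eventuallyEq hev
    have e : Fvec k g (ps ⌈|t - t0|⌉₊ t) = Fvec k g (ps n t) := congrArg (Fvec k g) (hUeq t htU)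
    show HasDerivAt _ (Fvec k g (ps ⌈|t - t0|⌉₊ t)) t
    rw [e]; exact this

end NPlusGeodesic

end
open Set Metric Real Filter Topology NPlusGeodesic in
/-- Geodesic completeness of the manifolds `N_{1,+}`, `N_{2,+}`, `N_{3,+}`: for `f` any
of the functions `e^y`, `e^y + y`, `e^y + e^{2y}`, every maximal solution of the
geodesic system `x'' = 0`, `x̃'' = 2 f'(y) x' y'`, `y'' = -f'(y) (x')²` is defined on
all of `ℝ`.  Equivalently, every solution defined on an open interval `I` extends to a
solution defined on all of `ℝ`. -/
theorem N_plus_geodesically_complete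
    (f : ℝ → ℝ)
    (hf : f = (fun y => Real.exp y) ∨ f = (fun y => Real.exp y + y) ∨
      f = (fun y => Real.exp y + Real.exp (2 * y)))
    (I : Set ℝ) (hIopen : IsOpen I) (hIconn : I.OrdConnected)
    (x xt y x' xt' y' : ℝ → ℝ)
    (hx : ∀ t ∈ I, HasDerivAt x (x' t) t)
    (hx' : ∀ t ∈ I, HasDerivAt x' 0 t)
    (hxt : ∀ t ∈ I, HasDerivAt xt (xt' t) t)
    (hxt' : ∀ t ∈ I, HasDerivAt xt' (2 * deriv f (y t) * x' t * y' t) t)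
    (hy : ∀ t ∈ I, HasDerivAt y (y' t) t)
    (hy' : ∀ t ∈ I, HasDerivAt y' (-(deriv f (y t) * (x' t) ^ 2)) t) :
    ∃ X XT Yg X' XT' Y' : ℝ → ℝ,
      (∀ t, HasDerivAt X (X' t) t) ∧
      (∀ t, HasDerivAt X' 0 t) ∧
      (∀ t, HasDerivAt XT (XT' t) t) ∧
      (∀ t, HasDerivAt XT' (2 * deriv f (Yg t) * X' t * Y' t) t) ∧
      (∀ t, HasDerivAt Yg (Y' t) t) ∧
      (∀ t, HasDerivAt Y' (-(deriv f (Yg t) * (X' t) ^ 2)) t) ∧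
      (∀ t ∈ I, X t = x t ∧ XT t = xt t ∧ Yg t = y t) := by
  -- the derivative data of `f` in each of the three cases
  obtain ⟨g, G, hfd, hg0, hgm, hG, hG0, hGm⟩ :
      ∃ g G : ℝ → ℝ, (∀ z, HasDerivAt f (g z) z) ∧ (∀ z, 0 ≤ g z) ∧ Monotone g ∧
        (∀ z, HasDerivAt g (G z) z) ∧ (∀ z, 0 ≤ G z) ∧ Monotone G := by
    have hexpm : Monotone Real.exp := fun a b h => (Real.exp_le_exp.2 h)
    rcases hf with rfl | rfl | rfl
    · exact ⟨Real.exp, Real.exp, fun z => Real.hasDerivAt_exp z, fun z => (Real.exp_pos z).le,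
        hexpm, fun z => Real.hasDerivAt_exp z, fun z => (Real.exp_pos z).le, hexpm⟩
    · refine ⟨fun z => Real.exp z + 1, Real.exp, fun z => ?_, fun z => by positivity,
        fun a b h => by simpa using add_le_add (hexpm h) (le_refl (1:ℝ)),
        fun z => (Real.hasDerivAt_exp z).add_const 1, fun z => (Real.exp_pos z).le, hexpm⟩
      exact (Real.hasDerivAt_exp z).add (hasDerivAt_id' z)
    · have h2y : ∀ z : ℝ, HasDerivAt (fun w : ℝ => 2 * w) 2 z := fun z => by
        simpa using (hasDerivAt_id z).const_mul (2:ℝ)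
      have hexp2 : ∀ z : ℝ, HasDerivAt (fun w : ℝ => Real.exp (2 * w))
          (Real.exp (2 * z) * 2) z := fun z => (Real.hasDerivAt_exp (2*z)).comp z (h2y z)
      have hmono2 : Monotone (fun z : ℝ => Real.exp (2 * z) * 2) := fun a b h => by
        have := hexpm (by linarith : 2*a ≤ 2*b)
        have h2 : (0:ℝ) ≤ 2 := by norm_num
        simpa using mul_le_mul_of_nonneg_right this h2
      refine ⟨fun z => Real.exp z + Real.exp (2 * z) * 2,
        fun z => Real.exp z + Real.exp (2 * z) * 2 * 2,
        fun z => (Real.hasDerivAt_exp z).add (hexp2 z),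
        fun z => by positivity,
        fun a b h => add_le_add (hexpm h) (hmono2 h),
        fun z => by exact (Real.hasDerivAt_exp z).add ((hexp2 z).mul_const 2),
        fun z => by positivity,
        fun a b h => add_le_add (hexpm h) (by
          have := hmono2 h
          have h2 : (0:ℝ) ≤ 2 := by norm_num
          simpa [mul_assoc] using mul_le_mul_of_nonneg_right this h2)⟩
  have hfderiv : deriv f = g := funext fun z => (hfd z).deriv
  rcases Set.eq_empty_or_nonempty I with hI | ⟨t0, ht0⟩
  · -- empty interval: take the trivial solution
    refine ⟨fun _ => 0, fun _ => 0, fun _ => 0, fun _ => 0, fun _ => 0, fun _ => 0,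
      fun t => hasDerivAt_const t 0, fun t => hasDerivAt_const t 0,
      fun t => hasDerivAt_const t 0, fun t => ?_, fun t => hasDerivAt_const t 0,
      fun t => ?_, fun t ht => ?_⟩
    · simpa using hasDerivAt_const t (0:ℝ)
    · simpa using hasDerivAt_const t (0:ℝ)
    · rw [hI] at ht; exact absurd ht (notMem_empty t)
  have hIconv : Convex ℝ I := hIconn.convex
  have hconst : ∀ u du : ℝ → ℝ, (∀ t ∈ I, HasDerivAt u (du t) t) →
      (∀ t ∈ I, du t = 0) → ∀ t ∈ I, u t = u t0 := by
    intro u du hu hdu t ht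
    have h := hIconv.norm_image_sub_le_of_norm_hasDerivWithin_le (f := u) (f' := du)
      (C := 0) (fun s hs => (hu s hs).hasDerivWithinAt)
      (fun s hs => by rw [hdu s hs]; simp) ht0 ht
    have h2 : ‖u t - u t0‖ ≤ 0 := by simpa using h
    have h3 : u t - u t0 = 0 := norm_le_zero_iff.1 h2
    linarith [h3]
  set c : ℝ := x' t0 with hc
  have hx'const : ∀ t ∈ I, x' t = c := hconst x' (fun _ => 0) hx' (fun _ _ => rfl)
  set k : ℝ := c ^ 2 with hk
  have hk0 : 0 ≤ k := sq_nonneg c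
  obtain ⟨p, hp0, hpd⟩ := global_exists hk0 hG hg0 hgm hG0 hGm t0 (y t0, y' t0)
  set Yg : ℝ → ℝ := fun t => (p t).1 with hYg
  set Yv : ℝ → ℝ := fun t => (p t).2 with hYv
  have hYd : ∀ t, HasDerivAt Yg (Yv t) t := fun t => hd_fst (hpd t)
  have hYvd : ∀ t, HasDerivAt Yv (-(k * g (Yg t))) t := fun t => hd_snd (hpd t)
  have hyI : ∀ t ∈ I, y t = Yg t ∧ y' t = Yv t := by
    intro t1 ht1
    set py : ℝ → ℝ × ℝ := fun t => (y t, y' t) with hpy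
    have hsol : ∀ (a b : ℝ), Icc a b ⊆ I → IsSolOn k g (Icc a b) py := by
      intro a b hJ t ht
      have h1 := ((hy t (hJ ht)).prodMk (hy' t (hJ ht))).hasDerivWithinAt (s := Icc a b)
      have h2 : (y' t, -(deriv f (y t) * x' t ^ 2)) = Fvec k g (py t) := by
        show _ = ((py t).2, -(k * g (py t).1))
        rw [hfderiv, hx'const t (hJ ht)]
        show (y' t, -(g (y t) * c ^ 2)) = (y' t, -(c ^ 2 * g (y t)))
        rw [mul_comm]
      rw [h2] at h1
      exact h1
    have hpsol : ∀ (a b : ℝ), IsSolOn k g (Icc a b) p :=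
      fun a b t _ => (hpd t).hasDerivWithinAt
    have hcomp : py t1 = p t1 := by
      rcases le_total t0 t1 with h | h
      · have hJ : Icc t0 t1 ⊆ I := hIconn.out ht0 ht1
        exact sol_unique hk0 hG hG0 hGm (⟨le_rfl, h⟩ : t0 ∈ Icc t0 t1)
          (hsol t0 t1 hJ) (hpsol t0 t1) (by rw [hp0]) t1 ⟨h, le_rfl⟩
      · have hJ : Icc t1 t0 ⊆ I := hIconn.out ht1 ht0
        exact sol_unique hk0 hG hG0 hGm (⟨h, le_rfl⟩ : t0 ∈ Icc t1 t0)
          (hsol t1 t0 hJ) (hpsol t1 t0) (by rw [hp0]) t1 ⟨le_rfl, h⟩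
    exact ⟨congrArg Prod.fst hcomp, congrArg Prod.snd hcomp⟩
  -- continuity facts
  have hfc : Continuous f := Differentiable.continuous (fun z => (hfd z).differentiableAt)
  have hYgc : Continuous Yg :=
    Differentiable.continuous (fun t => (hYd t).differentiableAt)
  set X : ℝ → ℝ := fun t => x t0 + c * (t - t0) with hX
  have hXd : ∀ t, HasDerivAt X c t := fun t => by
    have h := (((hasDerivAt_id t).sub_const t0).const_mul c).const_add (x t0)
    rw [← mul_one c]; exact h
  set XT'f : ℝ → ℝ := fun t => xt' t0 + 2 * c * (f (Yg t) - f (Yg t0)) with hXT'f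
  have hfYg : ∀ t, HasDerivAt (fun t => f (Yg t)) (g (Yg t) * Yv t) t :=
    fun t => (hfd (Yg t)).comp t (hYd t)
  have hXT'd : ∀ t, HasDerivAt XT'f (2 * deriv f (Yg t) * c * Yv t) t := fun t => by
    have h := (((hfYg t).sub_const (f (Yg t0))).const_mul (2 * c)).const_add (xt' t0)
    have e : 2 * deriv f (Yg t) * c * Yv t = 2 * c * (g (Yg t) * Yv t) := by rw [hfderiv]; ring
    rw [e]; exact h
  have hXT'c : Continuous XT'f :=
    continuous_const.add (continuous_const.mul ((hfc.comp hYgc).sub continuous_const))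
  set XTf : ℝ → ℝ := fun t => xt t0 + ∫ s in t0..t, XT'f s with hXTf
  have hXTd : ∀ t, HasDerivAt XTf (XT'f t) t := fun t =>
    ((hXT'c.integral_hasStrictDerivAt t0 t).hasDerivAt).const_add (xt t0)
  -- agreements on I
  have hXeq : ∀ t ∈ I, x t = X t := by
    intro t ht
    have h : x t - X t = x t0 - X t0 := hconst (fun t => x t - X t) (fun t => x' t - c)
      (fun s hs => (hx s hs).sub (hXd s))
      (fun s hs => by show x' s - c = 0; rw [hx'const s hs]; ring) t ht
    have h0 : x t0 - X t0 = 0 := by show x t0 - (x t0 + c * (t0 - t0)) = 0; ring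
    linarith
  have hXT'eq : ∀ t ∈ I, xt' t = XT'f t := by
    intro t ht
    have h : xt' t - XT'f t = xt' t0 - XT'f t0 := hconst (fun t => xt' t - XT'f t)
      (fun t => 2 * deriv f (y t) * x' t * y' t - 2 * deriv f (Yg t) * c * Yv t)
      (fun s hs => (hxt' s hs).sub (hXT'd s))
      (fun s hs => by
        show 2 * deriv f (y s) * x' s * y' s - 2 * deriv f (Yg s) * c * Yv s = 0
        rw [(hyI s hs).1, (hyI s hs).2, hx'const s hs]; ring) t ht
    have h0 : xt' t0 - XT'f t0 = 0 := by
      show xt' t0 - (xt' t0 + 2 * c * (f (Yg t0) - f (Yg t0))) = 0; ring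
    linarith
  have hXTeq : ∀ t ∈ I, xt t = XTf t := by
    intro t ht
    have h : xt t - XTf t = xt t0 - XTf t0 := hconst (fun t => xt t - XTf t)
      (fun t => xt' t - XT'f t)
      (fun s hs => (hxt s hs).sub (hXTd s))
      (fun s hs => by show xt' s - XT'f s = 0; rw [hXT'eq s hs]; ring) t ht
    have h0 : xt t0 - XTf t0 = 0 := by
      show xt t0 - (xt t0 + ∫ s in t0..t0, XT'f s) = 0
      rw [intervalIntegral.integral_same]; ring
    linarith
  refine ⟨X, XTf, Yg, fun _ => c, XT'f, Yv, fun t => hXd t, fun t => hasDerivAt_const t c,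
    hXTd, fun t => hXT'd t, hYd, fun t => ?_,
    fun t ht => ⟨(hXeq t ht).symm, (hXTeq t ht).symm, ((hyI t ht).1).symm⟩⟩
  convert hYvd t using 1
  rw [hfderiv]; ring
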